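/- Let N ≥ 2, α, λ ∈ ℝ, and let (u_i)_{i=0}^{N+1} be a real sequence satisfying (2 + α(i−1) − λ)u_i = u_{i−1} + u_{i+1} for all 1 ≤ i ≤ N. For ε ∈ [0,1] write u_{k+ε} = ε·u_{k+1} + (1−ε)·u_k. Then for every i ∈ {1,…,N−1} with u_i·u_{i+1} > 0 and every ε ∈ [0,1], there exists j ∈ [i, i+1] such that u_{i+1+ε} = (2 + α(j−1) − λ)·u_{i+ε} − u_{i−1+ε}. -/

import Mathlib

/-- for a real sequence satisfying the linear-potential recurrence
`(2 + α(i-1) - λ)u_i = u_{i-1} + u_{i+1}` for `1 ≤ i ≤ N`, and writing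
`u_{k+ε} = ε u_{k+1} + (1-ε) u_k`, for every `i ∈ {1,…,N-1}` with `u_i u_{i+1} > 0`
and every `ε ∈ [0,1]` there is `j ∈ [i, i+1]` with
`u_{i+1+ε} = (2 + α(j-1) - λ) u_{i+ε} - u_{i-1+ε}`. -/
theorem convex_combination_recurrence (N : ℕ) (hN : 2 ≤ N) (α lam : ℝ)
    (u : ℕ → ℝ)
    (hrec : ∀ i : ℕ, 1 ≤ i → i ≤ N →
      (2 + α * ((i : ℝ) - 1) - lam) * u i = u (i - 1) + u (i + 1)) :
    ∀ i : ℕ, 1 ≤ i → i ≤ N - 1 → u i * u (i + 1) > 0 →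
      ∀ ε : ℝ, 0 ≤ ε → ε ≤ 1 →
        ∃ j : ℝ, (i : ℝ) ≤ j ∧ j ≤ (i : ℝ) + 1 ∧
          ε * u (i + 2) + (1 - ε) * u (i + 1) =
            (2 + α * (j - 1) - lam) * (ε * u (i + 1) + (1 - ε) * u i) -
              (ε * u i + (1 - ε) * u (i - 1)) := by
  intro i hi1 hi2 hpos ε hε0 hε1
  have h1 := hrec i hi1 (by omega)
  have h2 := hrec (i + 1) (by omega) (by omega)
  simp only [Nat.add_sub_cancel] at h2
  simp only [show i + 1 + 1 = i + 2 by omega] at h2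
  push_cast at h2
  set m : ℝ := ε * u (i + 1) + (1 - ε) * u i with hm
  have hε1' : (0:ℝ) ≤ 1 - ε := by linarith
  have hcases : (0 < u i ∧ 0 < u (i + 1)) ∨ (u i < 0 ∧ u (i + 1) < 0) :=
    mul_pos_iff.mp hpos
  have hmne : m ≠ 0 := by
    rcases hcases with ⟨ha, hb⟩ | ⟨ha, hb⟩
    · have : 0 < m := by
        rcases eq_or_lt_of_le hε0 with h0 | h0
        · rw [hm, ← h0]; simpa using ha
        · have := mul_pos h0 hb
          nlinarith [mul_nonneg hε1' ha.le]
      exact this.ne'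
    · have : m < 0 := by
        rcases eq_or_lt_of_le hε0 with h0 | h0
        · rw [hm, ← h0]; simpa using ha
        · have := mul_pos h0 (neg_pos.mpr hb)
          nlinarith [mul_nonneg hε1' (neg_pos.mpr ha).le]
      exact this.ne
  refine ⟨1 + (ε * (i : ℝ) * u (i + 1) + (1 - ε) * ((i : ℝ) - 1) * u i) / m, ?_, ?_, ?_⟩
  · rcases hcases with ⟨ha, hb⟩ | ⟨ha, hb⟩
    · have hm0 : 0 < m := lt_of_le_of_ne (by
        nlinarith [mul_nonneg hε0 hb.le, mul_nonneg hε1' ha.le]) (Ne.symm hmne)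
      rw [show (i:ℝ) = 1 + ((i:ℝ) - 1) by ring]
      gcongr 1 + ?_
      rw [le_div_iff₀ hm0]
      nlinarith [mul_nonneg hε0 hb.le]
    · have hm0 : m < 0 := lt_of_le_of_ne (by
        nlinarith [mul_nonneg hε0 (neg_pos.mpr hb).le,
          mul_nonneg hε1' (neg_pos.mpr ha).le]) hmne
      rw [show (i:ℝ) = 1 + ((i:ℝ) - 1) by ring]
      gcongr 1 + ?_
      rw [le_div_iff_of_neg hm0]
      nlinarith [mul_nonneg hε0 (neg_pos.mpr hb).le]
  · rcases hcases with ⟨ha, hb⟩ | ⟨ha, hb⟩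
    · have hm0 : 0 < m := lt_of_le_of_ne (by
        nlinarith [mul_nonneg hε0 hb.le, mul_nonneg hε1' ha.le]) (Ne.symm hmne)
      rw [show (i:ℝ) + 1 = 1 + (i:ℝ) by ring]
      gcongr 1 + ?_
      rw [div_le_iff₀ hm0]
      nlinarith [mul_nonneg hε1' ha.le]
    · have hm0 : m < 0 := lt_of_le_of_ne (by
        nlinarith [mul_nonneg hε0 (neg_pos.mpr hb).le,
          mul_nonneg hε1' (neg_pos.mpr ha).le]) hmne
      rw [show (i:ℝ) + 1 = 1 + (i:ℝ) by ring]
      gcongr 1 + ?_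
      rw [div_le_iff_of_neg hm0]
      nlinarith [mul_nonneg hε1' (neg_pos.mpr ha).le]
  · rw [hm]
    have hmne' : ε * u (i + 1) + (1 - ε) * u i ≠ 0 := hmne
    field_simp
    linear_combination -ε * h2 - (1 - ε) * h1
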